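/- Let p be an odd prime and let G be a finite non-abelian p-abelian p-group of nilpotence class n such that |γ_n(G)| = p. Then G has a non-inner automorphism of order p that fixes the Frattini subgroup Φ(G) elementwise. -/

import Mathlib

open Subgroup in
/-- In a `p`-abelian `p`-group, all `p`-th powers are central. -/
lemma aux_pow_mem_center {G : Type*} [Group G] [Finite G] {p : ℕ} (hp : p.Prime)
    (hpG : IsPGroup p G) (hpab : ∀ x y : G, (x * y) ^ p = x ^ p * y ^ p) (y : G) :
    y ^ p ∈ Subgroup.center G := by
  obtain ⟨q, hq⟩ : ∃ q, p = q + 1 := ⟨p - 1, (Nat.succ_pred_eq_of_pos hp.pos).symm⟩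
  have key : ∀ x : G, Commute (x ^ q) (y ^ p) := by
    intro x
    have h1 : (x * y * x⁻¹) ^ p = x * y ^ p * x⁻¹ := by rw [conj_pow]
    have h2 : (x * y * x⁻¹) ^ p = x ^ p * y ^ p * (x ^ p)⁻¹ := by
      rw [hpab (x * y) x⁻¹, hpab x y, inv_pow]
    have h3 : x * y ^ p * x⁻¹ = x ^ p * y ^ p * (x ^ p)⁻¹ := h1.symm.trans h2
    have hu : (x ^ p)⁻¹ * x = (x ^ q)⁻¹ := by
      rw [hq, pow_succ', mul_inv_rev, mul_assoc, inv_mul_cancel, mul_one]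
    have c2 : (x ^ q)⁻¹ * y ^ p * ((x ^ q)⁻¹)⁻¹ = y ^ p := by
      rw [← hu]
      have h4 : (x ^ p)⁻¹ * (x * y ^ p * x⁻¹) * x ^ p = y ^ p := by
        rw [h3]; group
      calc (x ^ p)⁻¹ * x * y ^ p * ((x ^ p)⁻¹ * x)⁻¹
          = (x ^ p)⁻¹ * (x * y ^ p * x⁻¹) * x ^ p := by group
        _ = y ^ p := h4
    have hcomm : Commute ((x ^ q)⁻¹) (y ^ p) := by
      rw [mul_inv_eq_iff_eq_mul] at c2
      exact c2
    simpa [inv_inv] using hcomm.inv_left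
  rw [Subgroup.mem_center_iff]
  intro x
  rcases eq_or_ne (orderOf x) 1 with ho | ho
  · rw [orderOf_eq_one_iff] at ho
    rw [ho, one_mul, mul_one]
  · obtain ⟨k, hk⟩ := hpG x
    have hdvd : orderOf x ∣ p ^ k := orderOf_dvd_iff_pow_eq_one.mpr hk
    have hq1 : Nat.Coprime q p := by
      rw [hq]
      exact Nat.coprime_self_add_right.mpr (Nat.coprime_one_right q)
    have hcop : Nat.Coprime q (orderOf x) :=
      (hq1.pow_right k).coprime_dvd_right hdvd
    have hlt : 1 < orderOf x := lt_of_le_of_ne (orderOf_pos x) (Ne.symm ho)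
    obtain ⟨a, -, ha⟩ := Nat.exists_mul_mod_eq_one_of_coprime hcop hlt
    have hxa : (x ^ q) ^ a = x := by
      rw [← pow_mul, ← pow_mod_orderOf, ha, pow_one]
    have hc := (key x).pow_left a
    rw [hxa] at hc
    exact hc

open Subgroup in
lemma aux_twist {G : Type*} [Group G] [Finite G] {p : ℕ} (hp : p.Prime)
    (hpab : ∀ x y : G, (x * y) ^ p = x ^ p * y ^ p)
    (M : Subgroup G) [M.Normal]
    (x : G)
    (hord : orderOf ((QuotientGroup.mk' M) x) = p)
    (hgen : Subgroup.zpowers ((QuotientGroup.mk' M) x) = ⊤)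
    (k : G) (hkM : k ∈ M) (hkc : ∀ m ∈ M, m * k = k * m) (hk1 : k ≠ 1) (hkp : k ^ p = 1) :
    ∃ α : MulAut G, orderOf α = p ∧ (∀ m ∈ M, α m = m) ∧ α x = x * k := by
  classical
  haveI : Fact p.Prime := ⟨hp⟩
  set mk : G →* G ⧸ M := QuotientGroup.mk' M with hmk
  set xb : G ⧸ M := mk x with hxb
  have hmk1 : ∀ g : G, mk g = 1 ↔ g ∈ M := fun g => QuotientGroup.eq_one_iff g
  set P : G → Prop := fun c => c ∈ M ∧ ∀ m ∈ M, m * c = c * m with hP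
  have hPone : P 1 := ⟨one_mem M, fun m _ => by rw [mul_one, one_mul]⟩
  have hPmul : ∀ {a b}, P a → P b → P (a * b) := by
    rintro a b ⟨haM, hac⟩ ⟨hbM, hbc⟩
    exact ⟨mul_mem haM hbM, fun m hm => by
      rw [← mul_assoc, hac m hm, mul_assoc, hbc m hm, mul_assoc]⟩
  have hPconj : ∀ (g : G) {c : G}, P c → P (g * c * g⁻¹) := by
    rintro g c ⟨hcM, hcc⟩
    refine ⟨Subgroup.Normal.conj_mem ‹M.Normal› c hcM g, fun m hm => ?_⟩
    have hm' : g⁻¹ * m * g ∈ M := by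
      have := Subgroup.Normal.conj_mem ‹M.Normal› m hm g⁻¹
      simpa using this
    have hc := hcc _ hm'
    calc m * (g * c * g⁻¹) = g * ((g⁻¹ * m * g) * c) * g⁻¹ := by group
      _ = g * (c * (g⁻¹ * m * g)) * g⁻¹ := by rw [hc]
      _ = (g * c * g⁻¹) * m := by group
  set w : ℕ → G := fun j => (x * k) ^ j * (x ^ j)⁻¹ with hw
  have hw0 : w 0 = 1 := by simp [hw]
  have hwsucc : ∀ j, w (j + 1) = w j * (x ^ (j + 1) * k * (x ^ (j + 1))⁻¹) := by
    intro j
    show (x * k) ^ (j + 1) * (x ^ (j + 1))⁻¹ =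
      (x * k) ^ j * (x ^ j)⁻¹ * (x ^ (j + 1) * k * (x ^ (j + 1))⁻¹)
    rw [pow_succ (x * k) j, pow_succ x j]
    group
  have hwP : ∀ j, P (w j) := by
    intro j
    induction j with
    | zero => rw [hw0]; exact hPone
    | succ n ih =>
      rw [hwsucc n]
      exact hPmul ih (hPconj (x ^ (n + 1)) ⟨hkM, hkc⟩)
  have hxkp : (x * k) ^ p = x ^ p := by rw [hpab, hkp, mul_one]
  have hwper : ∀ j, w (j + p) = w j := by
    intro j
    show (x * k) ^ (j + p) * (x ^ (j + p))⁻¹ = (x * k) ^ j * (x ^ j)⁻¹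
    rw [pow_add, pow_add, hxkp, mul_inv_rev]
    group
  have hwmul : ∀ t j, w (j + t * p) = w j := by
    intro t
    induction t with
    | zero => intro j; simp
    | succ n ih =>
      intro j
      have h : j + (n + 1) * p = (j + n * p) + p := by ring
      rw [h, hwper, ih]
  have hwmod : ∀ {i j}, i % p = j % p → w i = w j := by
    intro i j hij
    have hi : w i = w (i % p) := by
      conv_lhs => rw [← Nat.mod_add_div' i p]
      rw [hwmul]
    have hj : w j = w (j % p) := by
      conv_lhs => rw [← Nat.mod_add_div' j p]
      rw [hwmul]
    rw [hi, hj, hij]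
  have hwpow : ∀ j, (w j) ^ p = 1 := by
    intro j
    show ((x * k) ^ j * (x ^ j)⁻¹) ^ p = 1
    rw [hpab ((x * k) ^ j) ((x ^ j)⁻¹), inv_pow, pow_right_comm, hxkp, pow_right_comm x j p]
    group
  have hvex : ∀ g : G, ∃ i, mk g = xb ^ i ∧ i < p := by
    intro g
    have hmem : mk g ∈ Subgroup.zpowers xb := by rw [hgen]; trivial
    obtain ⟨m, hm⟩ := Subgroup.mem_zpowers_iff.mp hmem
    have hp0 : (0:ℤ) < (p:ℤ) := by exact_mod_cast hp.pos
    refine ⟨(m % (p:ℤ)).toNat, ?_, ?_⟩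
    · rw [← hm]
      have h2 : xb ^ ((m % (p:ℤ)).toNat : ℤ) = xb ^ (m % (p:ℤ)) := by
        rw [Int.toNat_of_nonneg (Int.emod_nonneg m (ne_of_gt hp0))]
      rw [← zpow_natCast, h2, ← hord, zpow_mod_orderOf]
    · have h1 : m % (p:ℤ) < (p:ℤ) := Int.emod_lt_of_pos m hp0
      omega
  set v : G → ℕ := fun g => (hvex g).choose with hv
  have hv1 : ∀ g, mk g = xb ^ (v g) := fun g => (hvex g).choose_spec.1
  have hv2 : ∀ g, v g < p := fun g => (hvex g).choose_spec.2
  have vuniq : ∀ {i j}, i < p → j < p → xb ^ i = xb ^ j → i = j := by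
    intro i j hi hj hij
    have h := pow_eq_pow_iff_modEq.mp hij
    rw [hord] at h
    rw [← Nat.mod_eq_of_lt hi, ← Nat.mod_eq_of_lt hj]
    exact h
  have hveq : ∀ {g h : G}, mk g = mk h → v g = v h := by
    intro g h hgh
    exact vuniq (hv2 g) (hv2 h) (by rw [← hv1, ← hv1, hgh])
  have hvM : ∀ m ∈ M, v m = 0 := by
    intro m hm
    refine vuniq (hv2 m) hp.pos ?_
    rw [← hv1, pow_zero]
    exact (hmk1 m).mpr hm
  have hvx : v x = 1 := by
    refine vuniq (hv2 x) hp.one_lt ?_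
    rw [← hv1, pow_one]
  have hstep1 : ∀ (g : G) (j : ℕ), g * w j * g⁻¹ = x ^ (v g) * w j * (x ^ (v g))⁻¹ := by
    intro g j
    have hmM : (x ^ (v g))⁻¹ * g ∈ M := by
      rw [← hmk1, map_mul, map_inv, map_pow, ← hxb, ← hv1 g, inv_mul_cancel]
    have hcomm : ((x ^ (v g))⁻¹ * g) * w j = w j * ((x ^ (v g))⁻¹ * g) :=
      (hwP j).2 _ hmM
    calc g * w j * g⁻¹
        = x ^ (v g) * (((x ^ (v g))⁻¹ * g) * w j) * g⁻¹ := by group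
      _ = x ^ (v g) * (w j * ((x ^ (v g))⁻¹ * g)) * g⁻¹ := by rw [hcomm]
      _ = x ^ (v g) * w j * (x ^ (v g))⁻¹ := by group
  have hstep2 : ∀ a b : ℕ, w a * (x ^ a * w b * (x ^ a)⁻¹) = w (a + b) := by
    intro a b
    show (x * k) ^ a * (x ^ a)⁻¹ * (x ^ a * ((x * k) ^ b * (x ^ b)⁻¹) * (x ^ a)⁻¹) =
      (x * k) ^ (a + b) * (x ^ (a + b))⁻¹
    rw [pow_add, pow_add, mul_inv_rev]
    group
  have hFmul : ∀ g h : G, w (v (g * h)) * (g * h) = (w (v g) * g) * (w (v h) * h) := by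
    intro g h
    have h1 : (w (v g) * g) * (w (v h) * h) = w (v g) * (g * w (v h) * g⁻¹) * (g * h) := by
      group
    have hmod : (v (g * h)) % p = (v g + v h) % p := by
      have hxbpow : xb ^ (v g + v h) = xb ^ (v (g * h)) := by
        rw [pow_add, ← hv1, ← hv1, ← hv1, map_mul]
      have h2 := pow_eq_pow_iff_modEq.mp hxbpow
      rw [hord] at h2
      exact h2.symm
    rw [h1, hstep1 g (v h), hstep2 (v g) (v h), hwmod hmod]
  set F : G →* G := MonoidHom.mk' (fun g => w (v g) * g) hFmul with hF
  have hFapp : ∀ g, F g = w (v g) * g := fun g => rfl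
  have hFmk : ∀ g, mk (F g) = mk g := by
    intro g
    rw [hFapp, map_mul, (hmk1 (w (v g))).mpr (hwP (v g)).1, one_mul]
  have hFinj : Function.Injective F := by
    rw [injective_iff_map_eq_one]
    intro g hg
    have h0 : mk g = 1 := by rw [← hFmk, hg, map_one]
    have hvg : v g = 0 := by
      refine vuniq (hv2 g) hp.pos ?_
      rw [← hv1, pow_zero, h0]
    have h3 := hFapp g
    rw [hvg, hw0, one_mul] at h3
    rw [← h3, hg]
  have hFbij : Function.Bijective F := Finite.injective_iff_bijective.mp hFinj
  set A : MulAut G := MulEquiv.ofBijective F hFbij with hA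
  have hAapp : ∀ g, A g = w (v g) * g := fun g => rfl
  have hAM : ∀ m ∈ M, A m = m := by
    intro m hm
    rw [hAapp, hvM m hm, hw0, one_mul]
  have hAx : A x = x * k := by
    rw [hAapp, hvx]
    show (x * k) ^ 1 * (x ^ 1)⁻¹ * x = x * k
    group
  have hApow : ∀ (m : ℕ) (g : G), (A ^ m) g = (w (v g)) ^ m * g := by
    intro m
    induction m with
    | zero => intro g; rw [pow_zero, pow_zero, one_mul]; rfl
    | succ n ih =>
      intro g
      rw [pow_succ, MulAut.mul_apply, hAapp g, ih (w (v g) * g)]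
      have hvw : v (w (v g) * g) = v g := hveq (by
        rw [map_mul, (hmk1 (w (v g))).mpr (hwP (v g)).1, one_mul])
      rw [hvw, pow_succ]
      group
  have hAp : A ^ p = 1 := by
    ext g
    rw [hApow p g, hwpow (v g), one_mul]
    rfl
  have hA1 : A ≠ 1 := by
    intro h
    apply hk1
    have hx1 : A x = x := by rw [h]; rfl
    rw [hAx] at hx1
    exact mul_left_cancel (hx1.trans (mul_one x).symm)
  exact ⟨A, orderOf_eq_prime hAp hA1, hAM, hAx⟩

open Subgroup in
lemma aux_gen {G : Type*} [Group G] {M : Subgroup G} [M.Normal] (hM : IsCoatom M) :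
    ∀ q : G ⧸ M, q ≠ 1 → Subgroup.zpowers q = ⊤ := by
  intro q hq
  obtain ⟨g, rfl⟩ := QuotientGroup.mk'_surjective M q
  have hgM : g ∉ M := fun h => hq ((QuotientGroup.eq_one_iff g).mpr h)
  have hle : M ≤ (Subgroup.zpowers ((QuotientGroup.mk' M) g)).comap (QuotientGroup.mk' M) := by
    intro m hm
    have h1 : (QuotientGroup.mk' M) m = 1 := (QuotientGroup.eq_one_iff m).mpr hm
    rw [Subgroup.mem_comap, h1]
    exact one_mem _
  have hlt : M < (Subgroup.zpowers ((QuotientGroup.mk' M) g)).comap (QuotientGroup.mk' M) := by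
    refine lt_of_le_of_ne hle ?_
    intro heq
    apply hgM
    have : g ∈ (Subgroup.zpowers ((QuotientGroup.mk' M) g)).comap (QuotientGroup.mk' M) :=
      Subgroup.mem_comap.mpr (Subgroup.mem_zpowers _)
    rwa [← heq] at this
  have htop := hM.2 _ hlt
  exact Subgroup.comap_injective (QuotientGroup.mk'_surjective M)
    (htop.trans (Subgroup.comap_top (QuotientGroup.mk' M)).symm)

lemma aux_cardQ {G : Type*} [Group G] [Finite G] {p : ℕ} (hp : p.Prime) (hpG : IsPGroup p G)
    {M : Subgroup G} [M.Normal] (hM : IsCoatom M) : Nat.card (G ⧸ M) = p := by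
  haveI : Fact p.Prime := ⟨hp⟩
  obtain ⟨x, hx⟩ : ∃ x, x ∉ M := by
    by_contra h
    push_neg at h
    exact hM.1 ((Subgroup.eq_top_iff' M).mpr h)
  set q : G ⧸ M := (QuotientGroup.mk' M) x with hqdef
  have hq1 : q ≠ 1 := fun h => hx ((QuotientGroup.eq_one_iff x).mp h)
  have hQp : IsPGroup p (G ⧸ M) := hpG.to_quotient M
  have hqp : q ^ p = 1 := by
    by_contra hne
    have hgen := aux_gen hM (q ^ p) hne
    have hmem : q ∈ Subgroup.zpowers (q ^ p) := by rw [hgen]; trivial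
    obtain ⟨m, hm⟩ := Subgroup.mem_zpowers_iff.mp hmem
    have h1 : q ^ ((p : ℤ) * m - 1) = 1 := by
      rw [zpow_sub, zpow_one, zpow_mul, zpow_natCast, hm, mul_inv_cancel]
    have h2 : ((orderOf q : ℤ)) ∣ ((p:ℤ) * m - 1) := orderOf_dvd_iff_zpow_eq_one.mpr h1
    obtain ⟨c, hc⟩ := hQp q
    have hdvd : orderOf q ∣ p ^ c := orderOf_dvd_iff_pow_eq_one.mpr hc
    obtain ⟨j, hj, hoj⟩ := (Nat.dvd_prime_pow hp).mp hdvd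
    have hj0 : j ≠ 0 := by
      intro h0
      rw [h0, pow_zero] at hoj
      exact hq1 (orderOf_eq_one_iff.mp hoj)
    have hpd : (p:ℤ) ∣ (orderOf q : ℤ) := by
      exact_mod_cast Int.natCast_dvd_natCast.mpr (hoj ▸ dvd_pow_self p hj0)
    have hone : (p:ℤ) ∣ 1 := by
      have h3 : (p:ℤ) ∣ (p:ℤ)*m - ((p:ℤ)*m - 1) := dvd_sub (Dvd.intro m rfl) (hpd.trans h2)
      simpa using h3
    have hple : (p:ℤ) ≤ 1 := Int.le_of_dvd one_pos hone
    have := hp.one_lt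
    omega
  have hordq : orderOf q = p := orderOf_eq_prime hqp hq1
  have hgen := aux_gen hM q hq1
  rw [← Subgroup.card_top (G := G ⧸ M), ← hgen, Nat.card_zpowers, hordq]

lemma aux_center {G : Type*} [Group G] {M : Subgroup G} (hM : IsCoatom M) {x : G} (hx : x ∉ M)
    {v : G} (hvM : ∀ m ∈ M, m * v = v * m) (hvx : x * v = v * x) :
    v ∈ Subgroup.center G := by
  have htop : M ⊔ Subgroup.zpowers x = ⊤ := by
    refine hM.2 _ (lt_of_le_of_ne le_sup_left ?_)
    intro h
    exact hx (h ▸ (le_sup_right (a := M) (b := Subgroup.zpowers x) (Subgroup.mem_zpowers x)))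
  have hcent : (⊤ : Subgroup G) ≤ Subgroup.centralizer {v} := by
    rw [← htop]
    refine sup_le ?_ ?_
    · intro m hm
      rw [Subgroup.mem_centralizer_iff]
      intro h hh
      rw [Set.mem_singleton_iff] at hh
      rw [hh]
      exact (hvM m hm).symm
    · rw [Subgroup.zpowers_le]
      rw [Subgroup.mem_centralizer_iff]
      intro h hh
      rw [Set.mem_singleton_iff] at hh
      rw [hh]
      exact hvx.symm
  rw [Subgroup.mem_center_iff]
  intro g
  have hg := hcent (Subgroup.mem_top g)
  rw [Subgroup.mem_centralizer_iff] at hg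
  exact (hg v (Set.mem_singleton v)).symm

open Subgroup in
/-- Let `p` be an odd prime and let `G` be a finite non-abelian `p`-abelian `p`-group
(`(xy)^p = x^p y^p` for all `x y`) of nilpotence class `n` such that `|γ_n(G)| = p`.
Then `G` has a non-inner automorphism of order `p` fixing the Frattini subgroup
elementwise. (Recall `γ_n(G) = lowerCentralSeries G (n - 1)` in Mathlib's indexing.) -/
theorem stmt_4 (p : ℕ) (hp : p.Prime) (hodd : Odd p) (G : Type*) [Group G] [Finite G]
    [Group.IsNilpotent G] (hpG : IsPGroup p G) (hna : ¬ ∀ a b : G, a * b = b * a)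
    (hpab : ∀ x y : G, (x * y) ^ p = x ^ p * y ^ p)
    (n : ℕ) (hn : Group.nilpotencyClass G = n)
    (hcard : Nat.card ((⊤ : Subgroup G).lowerCentralSeries (n - 1)) = p) :
    ∃ α : MulAut G, (¬ ∃ g : G, α = MulAut.conj g) ∧ orderOf α = p ∧
      ∀ h ∈ frattini G, α h = h := by
  classical
  haveI : Fact p.Prime := ⟨hp⟩
  set π : G →* G := MonoidHom.mk' (fun g => g ^ p) (fun a b => hpab a b) with hπ
  have hΩmem : ∀ g : G, g ∈ π.ker ↔ g ^ p = 1 := fun g => MonoidHom.mem_ker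
  set Ω : Subgroup G := π.ker with hΩ
  obtain ⟨M₀, hM₀, hΩM₀⟩ : ∃ M : Subgroup G, IsCoatom M ∧ (Ω = ⊤ ∨ Ω ≤ M) := by
    rcases eq_or_ne Ω ⊤ with h | h
    · rcases eq_top_or_exists_le_coatom (⊥ : Subgroup G) with h' | ⟨M, hM, _⟩
      · exfalso
        apply hna
        intro a b
        have ha : a ∈ (⊥ : Subgroup G) := by rw [h']; trivial
        have hb : b ∈ (⊥ : Subgroup G) := by rw [h']; trivial
        rw [Subgroup.mem_bot] at ha hb
        rw [ha, hb]
      · exact ⟨M, hM, Or.inl h⟩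
    · rcases eq_top_or_exists_le_coatom Ω with h' | ⟨M, hM, hle⟩
      · exact absurd h' h
      · exact ⟨M, hM, Or.inr hle⟩
  haveI hM₀normal : M₀.Normal :=
    Subgroup.NormalizerCondition.normal_of_coatom M₀ normalizerCondition_of_isNilpotent hM₀
  have hcardQ : Nat.card (G ⧸ M₀) = p := aux_cardQ hp hpG hM₀
  have horder : ∀ q : G ⧸ M₀, q ≠ 1 → orderOf q = p := by
    intro q hq
    have hdvd : orderOf q ∣ p := hcardQ ▸ orderOf_dvd_natCard q
    rcases (hp.eq_one_or_self_of_dvd _ hdvd) with h | h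
    · exact absurd (orderOf_eq_one_iff.mp h) hq
    · exact h
  have hft : frattini G ≤ M₀ := frattini_le_coatom hM₀
  by_cases hZ : Subgroup.center G ≤ M₀
  · -- main case: the center is contained in M₀
    obtain ⟨x, hx⟩ : ∃ x, x ∉ M₀ := by
      by_contra h
      push_neg at h
      exact hM₀.1 ((Subgroup.eq_top_iff' M₀).mpr h)
    have hxb1 : (QuotientGroup.mk' M₀) x ≠ 1 := fun h => hx ((QuotientGroup.eq_one_iff x).mp h)
    have hordx : orderOf ((QuotientGroup.mk' M₀) x) = p := horder _ hxb1
    have hgenx : Subgroup.zpowers ((QuotientGroup.mk' M₀) x) = ⊤ := aux_gen hM₀ _ hxb1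
    set ZM : Subgroup G := M₀ ⊓ Subgroup.centralizer ↑M₀ with hZM
    have hδmul : ∀ a b : ↥ZM,
        x⁻¹ * ↑(a * b) * x * (↑(a * b))⁻¹ =
        (x⁻¹ * ↑a * x * (↑a)⁻¹) * (x⁻¹ * ↑b * x * (↑b)⁻¹) := by
      intro a b
      have hbM : (b : G) ∈ M₀ := (Subgroup.mem_inf.mp b.2).1
      have haC : (a : G) ∈ Subgroup.centralizer ↑M₀ := (Subgroup.mem_inf.mp a.2).2
      have hδbM : x⁻¹ * ↑b * x * (↑b)⁻¹ ∈ M₀ := by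
        refine mul_mem ?_ (inv_mem hbM)
        have := hM₀normal.conj_mem (↑b) hbM x⁻¹
        simpa using this
      have hcomm : Commute (x⁻¹ * ↑b * x * (↑b)⁻¹) (↑a : G) :=
        (Subgroup.mem_centralizer_iff.mp haC) _ hδbM
      have hcomm' := (hcomm.inv_right).eq
      push_cast
      calc x⁻¹ * (↑a * ↑b) * x * (↑a * ↑b)⁻¹
          = (x⁻¹ * ↑a * x) * ((x⁻¹ * ↑b * x * (↑b)⁻¹) * (↑a)⁻¹) := by group
        _ = (x⁻¹ * ↑a * x) * ((↑a)⁻¹ * (x⁻¹ * ↑b * x * (↑b)⁻¹)) := by rw [hcomm']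
        _ = (x⁻¹ * ↑a * x * (↑a)⁻¹) * (x⁻¹ * ↑b * x * (↑b)⁻¹) := by group
    set δ : ↥ZM →* G := MonoidHom.mk' (fun v : ↥ZM => x⁻¹ * ↑v * x * (↑v)⁻¹) hδmul with hδ
    have hδapp : ∀ v : ↥ZM, δ v = x⁻¹ * ↑v * x * (↑v)⁻¹ := fun v => rfl
    -- kernel of δ is the center
    have hZle : Subgroup.center G ≤ ZM :=
      le_inf hZ (Subgroup.center_le_centralizer (G := G) (M₀ : Set G))
    have hδker : δ.ker = (Subgroup.center G).subgroupOf ZM := by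
      ext v
      rw [MonoidHom.mem_ker, Subgroup.mem_subgroupOf, hδapp]
      constructor
      · intro h
        have hxv : x * ↑v = ↑v * x := by
          have h2 : x⁻¹ * ↑v * x = ↑v := by rwa [mul_inv_eq_one] at h
          conv_lhs => rw [← h2]
          group
        exact aux_center hM₀ hx
          (fun m hm => (Subgroup.mem_centralizer_iff.mp (Subgroup.mem_inf.mp v.2).2) m hm) hxv
      · intro h
        have hxv : x * ↑v = ↑v * x := (Subgroup.mem_center_iff.mp h) x
        rw [show x⁻¹ * ↑v * x * (↑v)⁻¹ = x⁻¹ * (↑v * x) * (↑v)⁻¹ by group, ← hxv]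
        group
    -- cardinality bookkeeping
    have hcard_of : ∀ f : ↥ZM →* G, Nat.card ↥ZM = Nat.card f.range * Nat.card f.ker := by
      intro f
      rw [Subgroup.card_eq_card_quotient_mul_card_subgroup f.ker]
      congr 1
      exact Nat.card_congr (QuotientGroup.quotientKerEquivRange f).toEquiv
    have hδkercard : Nat.card δ.ker = Nat.card (Subgroup.center G) := by
      rw [hδker]
      exact Nat.card_congr (Subgroup.subgroupOfEquivOfLe hZle).toEquiv
    -- the p-power homomorphism on ZM
    have hρmul : ∀ a b : ↥ZM, (↑(a * b) : G) ^ p = (↑a : G) ^ p * (↑b : G) ^ p := by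
      intro a b
      push_cast
      exact hpab _ _
    set ρ : ↥ZM →* G := MonoidHom.mk' (fun v : ↥ZM => (↑v : G) ^ p) hρmul with hρ
    set K : Subgroup G := Ω ⊓ ZM with hK
    have hρker : ρ.ker = K.subgroupOf ZM := by
      ext v
      rw [MonoidHom.mem_ker, Subgroup.mem_subgroupOf, hK, Subgroup.mem_inf]
      constructor
      · intro h
        exact ⟨(hΩmem ↑v).mpr h, v.2⟩
      · intro h
        exact (hΩmem ↑v).mp h.1
    have hρkercard : Nat.card ρ.ker = Nat.card K := by
      rw [hρker]
      exact Nat.card_congr (Subgroup.subgroupOfEquivOfLe inf_le_right).toEquiv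
    -- the key counting estimate : |ρ.range| < |center|
    have hcount : Nat.card ρ.range < Nat.card (Subgroup.center G) := by
      have hZpos : 1 < Nat.card (Subgroup.center G) := by
        haveI hGnt : Nontrivial G := by
          rcases subsingleton_or_nontrivial G with hs | hs
          · exact absurd (fun a b => Subsingleton.elim _ _) hna
          · exact hs
        haveI := hpG.center_nontrivial
        exact Finite.one_lt_card
      rcases hΩM₀ with hΩtop | hΩle
      · -- exponent p : ρ is trivial
        have hρbot : ρ.range = ⊥ := by
          rw [eq_bot_iff]
          rintro g ⟨v, rfl⟩
          have : (↑v : G) ∈ Ω := by rw [hΩtop]; trivial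
          have h1 : (↑v : G) ^ p = 1 := (hΩmem ↑v).mp this
          exact Subgroup.mem_bot.mpr h1
        rw [hρbot, Subgroup.card_bot]
        exact hZpos
      · -- Ω ≤ M₀ : compare with the p-power map on M₀
        have hσmul : ∀ a b : ↥M₀, (↑(a * b) : G) ^ p = (↑a : G) ^ p * (↑b : G) ^ p := by
          intro a b
          push_cast
          exact hpab _ _
        set σ : ↥M₀ →* G := MonoidHom.mk' (fun m : ↥M₀ => (↑m : G) ^ p) hσmul with hσ
        have hσker : σ.ker = Ω.subgroupOf M₀ := by
          ext m
          rw [MonoidHom.mem_ker, Subgroup.mem_subgroupOf]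
          exact (hΩmem ↑m).symm
        have hσkercard : Nat.card σ.ker = Nat.card Ω := by
          rw [hσker]
          exact Nat.card_congr (Subgroup.subgroupOfEquivOfLe hΩle).toEquiv
        have hcardM : Nat.card ↥M₀ = Nat.card σ.range * Nat.card σ.ker := by
          rw [Subgroup.card_eq_card_quotient_mul_card_subgroup σ.ker]
          congr 1
          exact Nat.card_congr (QuotientGroup.quotientKerEquivRange σ).toEquiv
        have hcardG : Nat.card G = Nat.card π.range * Nat.card Ω := by
          rw [Subgroup.card_eq_card_quotient_mul_card_subgroup π.ker]
          congr 1
          exact Nat.card_congr (QuotientGroup.quotientKerEquivRange π).toEquiv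
        have hcardGM : Nat.card G = p * Nat.card ↥M₀ := by
          rw [Subgroup.card_eq_card_quotient_mul_card_subgroup M₀, hcardQ]
        have hπrange : Nat.card π.range = p * Nat.card σ.range := by
          have hΩpos : 0 < Nat.card Ω := Nat.card_pos
          have h1 : Nat.card π.range * Nat.card Ω = (p * Nat.card σ.range) * Nat.card Ω := by
            rw [← hcardG, hcardGM, hcardM, hσkercard]
            ring
          exact Nat.eq_of_mul_eq_mul_right hΩpos h1
        have hπZ : π.range ≤ Subgroup.center G := by
          rintro g ⟨y, rfl⟩
          exact aux_pow_mem_center hp hpG hpab y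
        have hπle : Nat.card π.range ≤ Nat.card (Subgroup.center G) :=
          Subgroup.card_le_of_le hπZ
        have hσpos : 0 < Nat.card σ.range := Nat.card_pos
        have hρσ : ρ.range ≤ σ.range := by
          rintro g ⟨v, rfl⟩
          exact ⟨⟨↑v, (Subgroup.mem_inf.mp v.2).1⟩, rfl⟩
        have hrhole : Nat.card ρ.range ≤ Nat.card σ.range := Subgroup.card_le_of_le hρσ
        have h2p : 2 ≤ p := hp.two_le
        calc Nat.card ρ.range ≤ Nat.card σ.range := hrhole
          _ < p * Nat.card σ.range := by
              have := Nat.mul_le_mul_right (Nat.card σ.range) h2p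
              omega
          _ = Nat.card π.range := hπrange.symm
          _ ≤ Nat.card (Subgroup.center G) := hπle
    -- conclude : |δ.range| < |K|
    have hKpos : 0 < Nat.card K := Nat.card_pos
    have hmain : Nat.card δ.range < Nat.card K := by
      have e1 : Nat.card δ.range * Nat.card (Subgroup.center G) =
          Nat.card ρ.range * Nat.card K := by
        rw [← hδkercard, ← hρkercard, ← hcard_of δ, ← hcard_of ρ]
      by_contra hcon
      push_neg at hcon
      have h1 : Nat.card ρ.range * Nat.card K <
          Nat.card (Subgroup.center G) * Nat.card K :=
        (Nat.mul_lt_mul_right hKpos).mpr hcount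
      have h2 : Nat.card (Subgroup.center G) * Nat.card K ≤
          Nat.card (Subgroup.center G) * Nat.card δ.range :=
        Nat.mul_le_mul_left _ hcon
      have h3 : Nat.card (Subgroup.center G) * Nat.card δ.range =
          Nat.card δ.range * Nat.card (Subgroup.center G) := Nat.mul_comm _ _
      omega
    -- pick the twisting element k
    obtain ⟨k, hkK, hknr⟩ : ∃ k ∈ K, k ∉ δ.range := by
      by_contra hcon
      push_neg at hcon
      exact absurd (Subgroup.card_le_of_le hcon) (by omega)
    have hkM₀ : k ∈ M₀ := (Subgroup.mem_inf.mp (Subgroup.mem_inf.mp hkK).2).1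
    have hkcen : k ∈ Subgroup.centralizer ↑M₀ := (Subgroup.mem_inf.mp (Subgroup.mem_inf.mp hkK).2).2
    have hkp : k ^ p = 1 := (hΩmem k).mp (Subgroup.mem_inf.mp hkK).1
    have hk1 : k ≠ 1 := by
      intro h
      exact hknr (h ▸ one_mem δ.range)
    have hkc : ∀ m ∈ M₀, m * k = k * m := Subgroup.mem_centralizer_iff.mp hkcen
    obtain ⟨α, hαord, hαM, hαx⟩ := aux_twist hp hpab M₀ x hordx hgenx k hkM₀ hkc hk1 hkp
    refine ⟨α, ?_, hαord, fun h hh => hαM h (hft hh)⟩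
    rintro ⟨g, hg⟩
    -- conj g fixes M₀ pointwise
    have hfix : ∀ m ∈ M₀, g * m * g⁻¹ = m := by
      intro m hm
      have h1 : α m = m := hαM m hm
      rw [hg] at h1
      simpa [MulAut.conj_apply] using h1
    have hgcen : ∀ m ∈ M₀, m * g = g * m := by
      intro m hm
      have h1 := hfix m hm
      rw [mul_inv_eq_iff_eq_mul] at h1
      rw [← h1]
    have hgM₀ : g ∈ M₀ := by
      by_contra hgM
      exact hgM (hZ (aux_center hM₀ hgM hgcen rfl))
    have hgZM : g ∈ ZM := Subgroup.mem_inf.mpr ⟨hgM₀, Subgroup.mem_centralizer_iff.mpr hgcen⟩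
    apply hknr
    refine ⟨⟨g, hgZM⟩, ?_⟩
    rw [hδapp]
    have h1 : g * x * g⁻¹ = x * k := by
      have h2 : α x = x * k := hαx
      rw [hg] at h2
      simpa [MulAut.conj_apply] using h2
    calc x⁻¹ * g * x * g⁻¹ = x⁻¹ * (g * x * g⁻¹) := by group
      _ = x⁻¹ * (x * k) := by rw [h1]
      _ = k := by group
  · -- easy case : some central element lies outside M₀
    obtain ⟨x, hxc, hxM⟩ := SetLike.not_le_iff_exists.mp hZ
    have hxb1 : (QuotientGroup.mk' M₀) x ≠ 1 := fun h => hxM ((QuotientGroup.eq_one_iff x).mp h)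
    have hordx : orderOf ((QuotientGroup.mk' M₀) x) = p := horder _ hxb1
    have hgenx : Subgroup.zpowers ((QuotientGroup.mk' M₀) x) = ⊤ := aux_gen hM₀ _ hxb1
    -- the γ_n element t
    have hn2 : 2 ≤ n := by
      by_contra hcon
      push_neg at hcon
      apply hna
      intro a b
      have hbot : (⊤ : Subgroup G).lowerCentralSeries n = ⊥ := by
        rw [← hn]
        exact Subgroup.lowerCentralSeries_nilpotencyClass
      have h1 : (⊤ : Subgroup G).lowerCentralSeries 1 = ⊥ := by
        interval_cases n
        · rw [eq_bot_iff, ← hbot]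
          exact Subgroup.lowerCentralSeries_antitone ⊤ (Nat.zero_le 1)
        · exact hbot
      open scoped commutatorElement in
      have h2 : ⁅a, b⁆ ∈ (⊤ : Subgroup G).lowerCentralSeries 1 := by
        rw [Subgroup.top_lowerCentralSeries_one]
        exact Subgroup.commutator_mem_commutator (Subgroup.mem_top a) (Subgroup.mem_top b)
      rw [h1, Subgroup.mem_bot, commutatorElement_eq_one_iff_mul_comm] at h2
      exact h2
    set γ : Subgroup G := (⊤ : Subgroup G).lowerCentralSeries (n - 1) with hγ
    have hγcentral : γ ≤ Subgroup.center G := by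
      have hsucc : (⊤ : Subgroup G).lowerCentralSeries ((n - 1) + 1) = ⊥ := by
        have : (n - 1) + 1 = n := by omega
        rw [this, ← hn]
        exact Subgroup.lowerCentralSeries_nilpotencyClass
      rw [Subgroup.lowerCentralSeries_succ] at hsucc
      have := Subgroup.commutator_eq_bot_iff_le_centralizer.mp hsucc
      rwa [Subgroup.coe_top, Subgroup.centralizer_univ] at this
    have hγM₀ : γ ≤ M₀ := by
      have h1 : γ ≤ (⊤ : Subgroup G).lowerCentralSeries 1 := Subgroup.lowerCentralSeries_antitone ⊤ (by omega)
      refine h1.trans ?_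
      rw [Subgroup.top_lowerCentralSeries_one, _root_.commutator_def, Subgroup.commutator_le]
      intro g₁ _ g₂ _
      have hcyc : IsCyclic (G ⧸ M₀) := isCyclic_of_prime_card hcardQ
      letI : CommGroup (G ⧸ M₀) := IsCyclic.commGroup
      open scoped commutatorElement in
      have h2 : (QuotientGroup.mk' M₀) ⁅g₁, g₂⁆ = 1 := by
        rw [map_commutatorElement]
        rw [commutatorElement_eq_one_iff_mul_comm]
        exact mul_comm _ _
      exact (QuotientGroup.eq_one_iff _).mp h2
    haveI hγnt : Nontrivial ↥γ := by
      apply Finite.one_lt_card_iff_nontrivial.mp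
      rw [hcard]
      exact hp.one_lt
    obtain ⟨t, ht1⟩ := exists_ne (1 : ↥γ)
    have htG1 : (↑t : G) ≠ 1 := by
      intro h
      exact ht1 (Subtype.ext h)
    have htp : (↑t : G) ^ p = 1 := by
      have h1 : t ^ p = 1 := by
        have := pow_card_eq_one' (G := ↥γ) (x := t)
        rwa [hcard] at this
      calc (↑t : G) ^ p = ↑(t ^ p) := by push_cast; rfl
        _ = 1 := by rw [h1]; rfl
    have htcen : (↑t : G) ∈ Subgroup.center G := hγcentral t.2
    have htM₀ : (↑t : G) ∈ M₀ := hγM₀ t.2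
    have htc : ∀ m ∈ M₀, m * ↑t = ↑t * m := fun m _ => Subgroup.mem_center_iff.mp htcen m
    obtain ⟨α, hαord, hαM, hαx⟩ := aux_twist hp hpab M₀ x hordx hgenx ↑t htM₀ htc htG1 htp
    refine ⟨α, ?_, hαord, fun h hh => hαM h (hft hh)⟩
    rintro ⟨g, hg⟩
    have h1 : α x = x := by
      rw [hg, MulAut.conj_apply, mul_inv_eq_iff_eq_mul]
      exact Subgroup.mem_center_iff.mp hxc g
    rw [hαx] at h1
    exact htG1 (mul_left_cancel (h1.trans (mul_one x).symm))
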